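/- Let k be a field and n ≥ 1. Let b_1, …, b_n, c_1, …, c_n and d_{j,i} (for 1 ≤ i < j ≤ n) be natural numbers. In the polynomial ring k[a_{1,1}, a_{1,2}, …, a_{n,1}, a_{n,2}, b, c] define recursively F_1 = a_{1,1}a_{1,2} + (−1)^{1+b_1+c_1} b^{b_1} c^{c_1} and, for 1 ≤ j ≤ n−1, F_{j+1} = a_{j+1,1}a_{j+1,2} + (−1)^{1+b_{j+1}+c_{j+1}} b^{b_{j+1}} c^{c_{j+1}} ∏_{i=1}^{j} F_i^{d_{j+1,i}}. Then each F_i is nonzero, ord(F_1) = min{2, b_1 + c_1}, and for every 2 ≤ i ≤ n, ord(F_i) = min{2, b_i + c_i + Σ_{j=1}^{i−1} d_{i,j} · ord(F_j)}. -/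
import Mathlib


/- STATEMENT 5: orders of vanishing of the recursively defined polynomials `F_i`.
   The polynomial ring `k[a_{1,1}, a_{1,2}, …, a_{n,1}, a_{n,2}, b, c]` is modelled as
   multivariate polynomials in the variables `Sum.inl (i, false) = a_{i,1}`,
   `Sum.inl (i, true) = a_{i,2}` (for `1 ≤ i ≤ n`), `Sum.inr false = b` and
   `Sum.inr true = c`. -/

namespace Stmt5

open MvPolynomial

/-- The order of vanishing at the origin of a polynomial: the minimum total degree
of a monomial occurring with nonzero coefficient. -/
noncomputable def ord {σ : Type*} {k : Type*} [CommSemiring k] (P : MvPolynomial σ k) : ℕ :=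
  sInf ((fun s : σ →₀ ℕ => s.sum fun _ e => e) '' (P.support : Set (σ →₀ ℕ)))

section General
variable {σ : Type*} {k : Type*} [CommRing k] [IsDomain k]

/-- substitution X i ↦ (X i) * t into polynomials over the mv-ring -/
noncomputable def phi : MvPolynomial σ k →+* Polynomial (MvPolynomial σ k) :=
  eval₂Hom (Polynomial.C.comp (C : k →+* MvPolynomial σ k))
    (fun i => Polynomial.C (X i) * Polynomial.X)

lemma phi_monomial (s : σ →₀ ℕ) (a : k) :
    phi (monomial s a) = Polynomial.C (monomial s a) * Polynomial.X ^ (s.sum fun _ e => e) := by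
  classical
  rw [phi, eval₂Hom_monomial]
  simp only [RingHom.coe_comp, Function.comp_apply]
  have h1 : (s.prod fun i e => (Polynomial.C (X i : MvPolynomial σ k) * Polynomial.X) ^ e)
      = Polynomial.C (s.prod fun i e => (X i : MvPolynomial σ k) ^ e)
        * Polynomial.X ^ (s.sum fun _ e => e) := by
    rw [Finsupp.prod, Finsupp.prod, Finsupp.sum]
    simp only [mul_pow, ← Polynomial.C_pow]
    rw [Finset.prod_mul_distrib, map_prod, Finset.prod_pow_eq_pow_sum]
  rw [h1, ← mul_assoc, ← map_mul, ← monomial_eq]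

lemma coeff_phi (P : MvPolynomial σ k) (m : ℕ) :
    (phi P).coeff m
      = ∑ s ∈ P.support, if (s.sum fun _ e => e) = m then monomial s (coeff s P) else 0 := by
  classical
  conv_lhs => rw [P.as_sum, map_sum, Polynomial.finset_sum_coeff]
  refine Finset.sum_congr rfl fun s _ => ?_
  rw [phi_monomial, Polynomial.coeff_C_mul, Polynomial.coeff_X_pow]
  split_ifs with h1 h2 h2 <;> simp_all

lemma coeff_phi_ne_zero_iff (P : MvPolynomial σ k) (m : ℕ) :
    (phi P).coeff m ≠ 0 ↔ ∃ s ∈ P.support, (s.sum fun _ e => e) = m := by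
  classical
  rw [coeff_phi]
  constructor
  · intro h
    by_contra hc
    push_neg at hc
    refine h (Finset.sum_eq_zero fun s hs => ?_)
    rw [if_neg (hc s hs)]
  · rintro ⟨s₀, hs₀, hd⟩
    intro h
    have h2 : coeff s₀ (∑ s ∈ P.support,
        if (s.sum fun _ e => e) = m then monomial s (coeff s P) else 0) = coeff s₀ P := by
      rw [coeff_sum]
      rw [Finset.sum_eq_single s₀]
      · rw [if_pos hd, coeff_monomial, if_pos rfl]
      · intro s hs hne
        split_ifs with h1
        · rw [coeff_monomial, if_neg hne]
        · exact coeff_zero _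
      · intro hs; exact absurd hs₀ hs
    rw [h, coeff_zero] at h2
    exact (mem_support_iff.mp hs₀) h2.symm


lemma ord_le {P : MvPolynomial σ k} {s : σ →₀ ℕ} (h : s ∈ P.support) :
    ord P ≤ s.sum fun _ e => e :=
  Nat.sInf_le ⟨s, h, rfl⟩

lemma exists_ord {P : MvPolynomial σ k} (hP : P ≠ 0) :
    ∃ s ∈ P.support, (s.sum fun _ e => e) = ord P := by
  have : ((fun s : σ →₀ ℕ => s.sum fun _ e => e) '' (P.support : Set (σ →₀ ℕ))).Nonempty := by
    obtain ⟨s, hs⟩ := (support_nonempty).mpr hP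
    exact ⟨_, ⟨s, hs, rfl⟩⟩
  obtain ⟨s, hs, hd⟩ := Nat.sInf_mem this
  exact ⟨s, hs, hd⟩

lemma phi_ne_zero {P : MvPolynomial σ k} (hP : P ≠ 0) : phi P ≠ 0 := by
  obtain ⟨s, hs, hd⟩ := exists_ord hP
  intro h
  have := (coeff_phi_ne_zero_iff P (ord P)).mpr ⟨s, hs, hd⟩
  rw [h, Polynomial.coeff_zero] at this
  exact this rfl

lemma ord_eq_natTrailingDegree {P : MvPolynomial σ k} (hP : P ≠ 0) :
    ord P = (phi P).natTrailingDegree := by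
  refine le_antisymm ?_ ?_
  · have h0 : (phi P).trailingCoeff ≠ 0 :=
      Polynomial.trailingCoeff_nonzero_iff_nonzero.mpr (phi_ne_zero hP)
    rw [Polynomial.trailingCoeff] at h0
    obtain ⟨s, hs, hd⟩ := (coeff_phi_ne_zero_iff P _).mp h0
    exact hd ▸ ord_le hs
  · obtain ⟨s, hs, hd⟩ := exists_ord hP
    exact Polynomial.natTrailingDegree_le_of_ne_zero
      ((coeff_phi_ne_zero_iff P (ord P)).mpr ⟨s, hs, hd⟩)

lemma ord_mul {P Q : MvPolynomial σ k} (hP : P ≠ 0) (hQ : Q ≠ 0) :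
    ord (P * Q) = ord P + ord Q := by
  rw [ord_eq_natTrailingDegree (mul_ne_zero hP hQ), ord_eq_natTrailingDegree hP,
    ord_eq_natTrailingDegree hQ, map_mul,
    Polynomial.natTrailingDegree_mul (phi_ne_zero hP) (phi_ne_zero hQ)]

lemma ord_C {a : k} (ha : a ≠ 0) : ord (C a : MvPolynomial σ k) = 0 := by
  have h0 : (0 : σ →₀ ℕ) ∈ (C a : MvPolynomial σ k).support := by
    rw [mem_support_iff]; simpa using ha
  have := ord_le h0
  simpa using this

lemma ord_one : ord (1 : MvPolynomial σ k) = 0 := by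
  rw [← C_1]; exact ord_C one_ne_zero

lemma ord_X (i : σ) : ord (X i : MvPolynomial σ k) = 1 := by
  rw [ord, support_X]
  have : ((fun s : σ →₀ ℕ => s.sum fun _ e => e) ''
      (({Finsupp.single i 1} : Finset (σ →₀ ℕ)) : Set (σ →₀ ℕ))) = {1} := by
    simp
  rw [this, csInf_singleton]

lemma ord_pow {P : MvPolynomial σ k} (hP : P ≠ 0) (n : ℕ) : ord (P ^ n) = n * ord P := by
  induction n with
  | zero => simpa using ord_one
  | succ n ih => rw [pow_succ, ord_mul (pow_ne_zero _ hP) hP, ih]; ring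

lemma ord_prod {ι : Type*} (s : Finset ι) (f : ι → MvPolynomial σ k)
    (h : ∀ i ∈ s, f i ≠ 0) : ord (∏ i ∈ s, f i) = ∑ i ∈ s, ord (f i) := by
  classical
  induction s using Finset.cons_induction with
  | empty => simpa using ord_one
  | cons a s ha ih =>
    rw [Finset.prod_cons, Finset.sum_cons,
      ord_mul (h a (Finset.mem_cons_self a s))
        (Finset.prod_ne_zero_iff.mpr fun i hi => h i (Finset.mem_cons_of_mem hi)),
      ih fun i hi => h i (Finset.mem_cons_of_mem hi)]

lemma mem_support_add_iff {P Q : MvPolynomial σ k} (h : Disjoint P.support Q.support)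
    (s : σ →₀ ℕ) : s ∈ (P + Q).support ↔ s ∈ P.support ∨ s ∈ Q.support := by
  simp only [mem_support_iff, coeff_add]
  constructor
  · intro hs
    by_contra hc
    push_neg at hc
    rw [hc.1, hc.2, add_zero] at hs
    exact hs rfl
  · rintro (hs | hs)
    · have : coeff s Q = 0 := by
        by_contra hq
        exact (Finset.disjoint_left.mp h (mem_support_iff.mpr hs)) (mem_support_iff.mpr hq)
      rw [this, add_zero]; exact hs
    · have : coeff s P = 0 := by
        by_contra hp
        exact (Finset.disjoint_left.mp h (mem_support_iff.mpr hp)) (mem_support_iff.mpr hs)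
      rw [this, zero_add]; exact hs

lemma ord_add_disjoint {P Q : MvPolynomial σ k} (hP : P ≠ 0) (hQ : Q ≠ 0)
    (h : Disjoint P.support Q.support) :
    ord (P + Q) = min (ord P) (ord Q) ∧ P + Q ≠ 0 := by
  have hne : P + Q ≠ 0 := by
    intro h0
    obtain ⟨s, hs⟩ := support_nonempty.mpr hP
    have := (mem_support_add_iff h s).mpr (Or.inl hs)
    rw [h0, support_zero] at this
    exact absurd this (Finset.notMem_empty s)
  refine ⟨le_antisymm ?_ ?_, hne⟩
  · obtain ⟨s, hs, hd⟩ := exists_ord hP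
    obtain ⟨t, ht, he⟩ := exists_ord hQ
    refine le_min ?_ ?_
    · exact hd ▸ ord_le ((mem_support_add_iff h s).mpr (Or.inl hs))
    · exact he ▸ ord_le ((mem_support_add_iff h t).mpr (Or.inr ht))
  · obtain ⟨s, hs, hd⟩ := exists_ord hne
    rcases (mem_support_add_iff h s).mp hs with hs' | hs'
    · exact le_trans (min_le_left _ _) (hd ▸ ord_le hs')
    · exact le_trans (min_le_right _ _) (hd ▸ ord_le hs')

end General

variable {k : Type*} [Field k]

/-- `F_1 = a_{1,1}a_{1,2} + (−1)^{1+b_1+c_1} b^{b_1} c^{c_1}` and, recursively,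
`F_{j+1} = a_{j+1,1}a_{j+1,2} + (−1)^{1+b_{j+1}+c_{j+1}} b^{b_{j+1}} c^{c_{j+1}}
  ∏_{i=1}^{j} F_i^{d_{j+1,i}}`.
(`F 0` is a junk value, indices are 1-based.) -/
noncomputable def F (k : Type*) [Field k] (b c : ℕ → ℕ) (d : ℕ → ℕ → ℕ) :
    ℕ → MvPolynomial ((ℕ × Bool) ⊕ Bool) k
  | 0 => 1
  | j + 1 =>
      X (Sum.inl (j + 1, false)) * X (Sum.inl (j + 1, true)) +
        (-1 : MvPolynomial ((ℕ × Bool) ⊕ Bool) k) ^ (1 + b (j + 1) + c (j + 1)) *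
          X (Sum.inr false) ^ b (j + 1) * X (Sum.inr true) ^ c (j + 1) *
          ∏ i ∈ (Finset.range j).attach, F k b c d (i.1 + 1) ^ d (j + 1) (i.1 + 1)
  decreasing_by
    have := i.2
    simp only [Finset.mem_range] at this
    omega

lemma neg_one_ne_zero' : (-1 : MvPolynomial ((ℕ × Bool) ⊕ Bool) k) ≠ 0 :=
  neg_ne_zero.mpr one_ne_zero

lemma ord_neg_one_pow (e : ℕ) : ord ((-1 : MvPolynomial ((ℕ × Bool) ⊕ Bool) k) ^ e) = 0 := by
  rw [ord_pow neg_one_ne_zero' e]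
  have : (-1 : MvPolynomial ((ℕ × Bool) ⊕ Bool) k) = C (-1) := by simp
  rw [this, ord_C (neg_ne_zero.mpr one_ne_zero), mul_zero]

lemma vars_F (b c : ℕ → ℕ) (d : ℕ → ℕ → ℕ) :
    ∀ i j t, Sum.inl (j, t) ∈ (F k b c d i).vars → j ≤ i := by
  intro i
  induction i using Nat.strong_induction_on with
  | _ i ih =>
    match i with
    | 0 =>
      intro j t h
      rw [F, ← C_1] at h
      rw [vars_C] at h
      exact absurd h (Finset.notMem_empty _)
    | m + 1 =>
      intro j t h
      rw [F] at h
      have h1 := vars_add_subset _ _ h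
      rw [Finset.mem_union] at h1
      rcases h1 with h1 | h1
      · have h2 := vars_mul _ _ h1
        rw [Finset.mem_union, vars_X, vars_X, Finset.mem_singleton,
          Finset.mem_singleton] at h2
        rcases h2 with h2 | h2 <;> (simp only [Sum.inl.injEq, Prod.mk.injEq] at h2; omega)
      · have h2 := vars_mul _ _ h1
        rw [Finset.mem_union] at h2
        rcases h2 with h2 | h2
        · have h3 := vars_mul _ _ h2
          rw [Finset.mem_union] at h3
          rcases h3 with h3 | h3
          · have h4 := vars_mul _ _ h3
            rw [Finset.mem_union] at h4
            rcases h4 with h4 | h4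
            · have h5 := vars_pow _ _ h4
              have : (-1 : MvPolynomial ((ℕ × Bool) ⊕ Bool) k) = C (-1) := by simp
              rw [this, vars_C] at h5
              exact absurd h5 (Finset.notMem_empty _)
            · have h5 := vars_pow _ _ h4
              rw [vars_X, Finset.mem_singleton] at h5
              exact absurd h5 (by simp)
          · have h5 := vars_pow _ _ h3
            rw [vars_X, Finset.mem_singleton] at h5
            exact absurd h5 (by simp)
        · have h3 := vars_prod _ h2
          rw [Finset.mem_biUnion] at h3
          obtain ⟨x, _, hx⟩ := h3
          have h4 := vars_pow _ _ hx
          have hlt : x.1 + 1 < m + 1 := by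
            have := x.2
            simp only [Finset.mem_range] at this
            omega
          have := ih (x.1 + 1) hlt j t h4
          omega

lemma supp_F (b c : ℕ → ℕ) (d : ℕ → ℕ → ℕ) (i j : ℕ) (t : Bool) (hij : i < j)
    (s : (ℕ × Bool) ⊕ Bool →₀ ℕ) (hs : s ∈ (F k b c d i).support) :
    s (Sum.inl (j, t)) = 0 := by
  by_contra hne
  have : Sum.inl (j, t) ∈ (F k b c d i).vars :=
    (mem_vars _).mpr ⟨s, hs, Finsupp.mem_support_iff.mpr hne⟩
  exact absurd (vars_F b c d i j t this) (by omega)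

lemma F_key (b c : ℕ → ℕ) (d : ℕ → ℕ → ℕ) :
    ∀ i, 1 ≤ i → F k b c d i ≠ 0 ∧
      ord (F k b c d i) =
        min 2 (b i + c i + ∑ j ∈ Finset.Icc 1 (i - 1), d i j * ord (F k b c d j)) := by
  intro i
  induction i using Nat.strong_induction_on with
  | _ i ih =>
    match i with
    | 0 => intro h; omega
    | j + 1 =>
      intro _
      set P₁ : MvPolynomial ((ℕ × Bool) ⊕ Bool) k :=
        X (Sum.inl (j + 1, false)) * X (Sum.inl (j + 1, true)) with hP₁def
      set T : MvPolynomial ((ℕ × Bool) ⊕ Bool) k :=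
        (-1 : MvPolynomial ((ℕ × Bool) ⊕ Bool) k) ^ (1 + b (j + 1) + c (j + 1)) *
          X (Sum.inr false) ^ b (j + 1) * X (Sum.inr true) ^ c (j + 1) *
          ∏ x ∈ (Finset.range j).attach, F k b c d (x.1 + 1) ^ d (j + 1) (x.1 + 1) with hTdef
      have hFeq : F k b c d (j + 1) = P₁ + T := by rw [F]
      -- nonzero-ness of the pieces
      have hFsmall : ∀ x : {x // x ∈ Finset.range j}, F k b c d (x.1 + 1) ≠ 0 := by
        intro x
        have hx := x.2
        simp only [Finset.mem_range] at hx
        exact (ih (x.1 + 1) (by omega) (by omega)).1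
      have hprod_ne : (∏ x ∈ (Finset.range j).attach,
          F k b c d (x.1 + 1) ^ d (j + 1) (x.1 + 1)) ≠ 0 :=
        Finset.prod_ne_zero_iff.mpr fun x _ => pow_ne_zero _ (hFsmall x)
      have hT_ne : T ≠ 0 :=
        mul_ne_zero (mul_ne_zero (mul_ne_zero (pow_ne_zero _ neg_one_ne_zero')
          (pow_ne_zero _ (X_ne_zero _))) (pow_ne_zero _ (X_ne_zero _))) hprod_ne
      have hP₁_ne : P₁ ≠ 0 := mul_ne_zero (X_ne_zero _) (X_ne_zero _)
      -- order computations
      have hordP₁ : ord P₁ = 2 := by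
        rw [hP₁def, ord_mul (X_ne_zero _) (X_ne_zero _), ord_X, ord_X]
      have hordT : ord T = b (j + 1) + c (j + 1) +
          ∑ x ∈ (Finset.range j).attach, d (j + 1) (x.1 + 1) * ord (F k b c d (x.1 + 1)) := by
        rw [hTdef,
          ord_mul (mul_ne_zero (mul_ne_zero (pow_ne_zero _ neg_one_ne_zero')
            (pow_ne_zero _ (X_ne_zero _))) (pow_ne_zero _ (X_ne_zero _))) hprod_ne,
          ord_mul (mul_ne_zero (pow_ne_zero _ neg_one_ne_zero')
            (pow_ne_zero _ (X_ne_zero _))) (pow_ne_zero _ (X_ne_zero _)),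
          ord_mul (pow_ne_zero _ neg_one_ne_zero') (pow_ne_zero _ (X_ne_zero _)),
          ord_neg_one_pow, ord_pow (X_ne_zero _), ord_pow (X_ne_zero _), ord_X, ord_X,
          ord_prod _ _ fun x _ => pow_ne_zero _ (hFsmall x)]
        have : ∀ x : {x // x ∈ Finset.range j},
            ord (F k b c d (x.1 + 1) ^ d (j + 1) (x.1 + 1))
              = d (j + 1) (x.1 + 1) * ord (F k b c d (x.1 + 1)) := fun x => by
          rw [ord_pow (hFsmall x)]
        rw [Finset.sum_congr rfl fun x _ => this x]
        ring
      -- disjointness of supports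
      have hdisj : Disjoint P₁.support T.support := by
        have hP₁m : P₁ = monomial
            (Finsupp.single (Sum.inl (j + 1, false)) 1
              + Finsupp.single (Sum.inl (j + 1, true)) 1) (1 : k) := by
          rw [hP₁def]
          have hX : ∀ y : (ℕ × Bool) ⊕ Bool,
              (X y : MvPolynomial ((ℕ × Bool) ⊕ Bool) k)
                = monomial (Finsupp.single y 1) 1 := fun y => rfl
          rw [hX, hX, monomial_mul, one_mul]
        classical
        rw [Finset.disjoint_left]
        intro s hsP hsT
        rw [hP₁m, support_monomial, if_neg one_ne_zero, Finset.mem_singleton] at hsP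
        -- the variable inl (j+1, false) does not occur in T
        have hnv : Sum.inl ((j + 1 : ℕ), false) ∉ T.vars := by
          intro hv
          rw [hTdef] at hv
          have h2 := vars_mul _ _ hv
          rw [Finset.mem_union] at h2
          rcases h2 with h2 | h2
          · have h3 := vars_mul _ _ h2
            rw [Finset.mem_union] at h3
            rcases h3 with h3 | h3
            · have h4 := vars_mul _ _ h3
              rw [Finset.mem_union] at h4
              rcases h4 with h4 | h4
              · have h5 := vars_pow _ _ h4
                have hne1 : (-1 : MvPolynomial ((ℕ × Bool) ⊕ Bool) k) = C (-1) := by simp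
                rw [hne1, vars_C] at h5
                exact absurd h5 (Finset.notMem_empty _)
              · have h5 := vars_pow _ _ h4
                rw [vars_X, Finset.mem_singleton] at h5
                exact absurd h5 (by simp)
            · have h5 := vars_pow _ _ h3
              rw [vars_X, Finset.mem_singleton] at h5
              exact absurd h5 (by simp)
          · have h3 := vars_prod _ h2
            rw [Finset.mem_biUnion] at h3
            obtain ⟨x, _, hx⟩ := h3
            have h4 := vars_pow _ _ hx
            have h5 := vars_F b c d (x.1 + 1) (j + 1) false h4
            have := x.2
            simp only [Finset.mem_range] at this
            omega
        have hzero : s (Sum.inl ((j + 1 : ℕ), false)) = 0 := by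
          by_contra hne
          exact hnv ((mem_vars _).mpr ⟨s, hsT, Finsupp.mem_support_iff.mpr hne⟩)
        rw [hsP] at hzero
        simp [Finsupp.single_apply] at hzero
      obtain ⟨hord, hne⟩ := ord_add_disjoint hP₁_ne hT_ne hdisj
      rw [← hFeq] at hord hne
      refine ⟨hne, ?_⟩
      rw [hord, hordP₁, hordT]
      congr 1
      congr 1
      rw [Finset.sum_attach (Finset.range j)
        (fun m => d (j + 1) (m + 1) * ord (F k b c d (m + 1)))]
      have : j + 1 - 1 = j := by omega
      rw [this, ← Finset.Ico_add_one_right_eq_Icc, Finset.sum_Ico_eq_sum_range, this]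
      exact Finset.sum_congr rfl fun x _ => by rw [add_comm 1 x]

theorem ord_F (n : ℕ) (hn : 1 ≤ n) (b c : ℕ → ℕ) (d : ℕ → ℕ → ℕ) :
    (∀ i, 1 ≤ i → i ≤ n → F k b c d i ≠ 0) ∧
    ord (F k b c d 1) = min 2 (b 1 + c 1) ∧
    ∀ i, 2 ≤ i → i ≤ n →
      ord (F k b c d i) =
        min 2 (b i + c i + ∑ j ∈ Finset.Icc 1 (i - 1), d i j * ord (F k b c d j)) := by
  refine ⟨fun i hi _ => (F_key b c d i hi).1, ?_, fun i hi _ => (F_key b c d i (by omega)).2⟩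
  have h1 := (F_key (k := k) b c d 1 le_rfl).2
  rw [show (1:ℕ) - 1 = 0 from rfl, Finset.Icc_eq_empty (by omega), Finset.sum_empty,
    add_zero] at h1
  exact h1

end Stmt5
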